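/- Let G be a finitely presented pro-p group with presentation G^{ab} = ⟨x, y, z, w | (xz^{-1})^p = 1, all generators commute⟩. Then G^{ab} ≅ Z_p^3 × Z/p; in particular G^{ab} has an element of order p and rk_{Q_p}(G) = 3. -/

import Mathlib

open scoped TensorProduct

set_option synthInstance.maxHeartbeats 1000000
set_option maxHeartbeats 1000000

/-- The relation submodule of `ℤ_p⁴` corresponding to the abelianized relation
`(x z⁻¹)^p = 1`, i.e. `p·(e₀ − e₂)` additively. -/
noncomputable def relSubmodule (p : ℕ) [Fact p.Prime] : Submodule ℤ_[p] (Fin 4 → ℤ_[p]) :=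
  Submodule.span ℤ_[p]
    {(p : ℤ_[p]) • (Pi.single (0 : Fin 4) (1 : ℤ_[p]) - Pi.single (2 : Fin 4) (1 : ℤ_[p]))}

/-- The abelianization `G^{ab} = ⟨x, y, z, w ∣ (x z⁻¹)^p = 1, all generators
commute⟩` of `G = F ⨿_C F`, written additively as a `ℤ_p`-module. -/
abbrev GabModule (p : ℕ) [Fact p.Prime] : Type := (Fin 4 → ℤ_[p]) ⧸ relSubmodule p

section Aux

variable (p : ℕ) [Fact p.Prime]

/-- The target module. -/
abbrev TargetMod : Type := (Fin 3 → ℤ_[p]) × (ℤ_[p] ⧸ Ideal.span {(p : ℤ_[p])})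

/-- Projection. -/
noncomputable def prj (i : Fin 4) : (Fin 4 → ℤ_[p]) →ₗ[ℤ_[p]] ℤ_[p] := LinearMap.proj i

/-- Projection. -/
noncomputable def prj3 (i : Fin 3) : (Fin 3 → ℤ_[p]) →ₗ[ℤ_[p]] ℤ_[p] := LinearMap.proj i

/-- Forward linear map. -/
noncomputable def Fmap : (Fin 4 → ℤ_[p]) →ₗ[ℤ_[p]] TargetMod p :=
  LinearMap.prod
    (LinearMap.pi (fun j =>
      (![prj p 1, prj p 0 + prj p 2, prj p 3] :
        Fin 3 → ((Fin 4 → ℤ_[p]) →ₗ[ℤ_[p]] ℤ_[p])) j))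
    ((Ideal.span {(p : ℤ_[p])}).mkQ ∘ₗ LinearMap.proj 0)

lemma Fmap_ker : relSubmodule p ≤ LinearMap.ker (Fmap p) := by
  rw [relSubmodule, Submodule.span_le, Set.singleton_subset_iff]
  simp only [SetLike.mem_coe, LinearMap.mem_ker]
  refine Prod.ext ?_ ?_
  · funext j
    fin_cases j <;>
      simp [Fmap, prj, Pi.single_apply]
  · have : ((p : ℤ_[p]) • (Pi.single (0 : Fin 4) (1 : ℤ_[p]) -
        Pi.single (2 : Fin 4) (1 : ℤ_[p])) : Fin 4 → ℤ_[p]) 0 = (p : ℤ_[p]) := by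
      simp [Pi.single_apply]
    simp only [Fmap, LinearMap.prod_apply, LinearMap.coe_comp, Function.comp_apply,
      LinearMap.proj_apply, Function.prod, Submodule.mkQ_apply]
    rw [this]
    simpa only [Prod.snd_zero, Submodule.Quotient.mk_eq_zero] using
      Submodule.mem_span_singleton_self ((p : ℤ_[p]))

/-- First backward map. -/
noncomputable def G1map : (Fin 3 → ℤ_[p]) →ₗ[ℤ_[p]] GabModule p :=
  (relSubmodule p).mkQ ∘ₗ LinearMap.pi (fun i =>
    (![0, prj3 p 0, prj3 p 1, prj3 p 2] :
      Fin 4 → ((Fin 3 → ℤ_[p]) →ₗ[ℤ_[p]] ℤ_[p])) i)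

/-- Auxiliary map `t ↦ (t, 0, -t, 0)`. -/
noncomputable def Lmap : ℤ_[p] →ₗ[ℤ_[p]] (Fin 4 → ℤ_[p]) :=
  LinearMap.pi (fun i =>
    (![LinearMap.id, 0, -LinearMap.id, 0] : Fin 4 → (ℤ_[p] →ₗ[ℤ_[p]] ℤ_[p])) i)

lemma Lmap_p : Lmap p (p : ℤ_[p]) =
    (p : ℤ_[p]) • (Pi.single (0 : Fin 4) (1 : ℤ_[p]) - Pi.single (2 : Fin 4) (1 : ℤ_[p])) := by
  funext i
  fin_cases i <;> simp [Lmap, Pi.single_apply]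

lemma G2_ker : Ideal.span {(p : ℤ_[p])} ≤
    LinearMap.ker ((relSubmodule p).mkQ ∘ₗ Lmap p) := by
  rw [Ideal.span_le, Set.singleton_subset_iff]
  simp only [SetLike.mem_coe, LinearMap.mem_ker, LinearMap.coe_comp, Function.comp_apply,
    Submodule.mkQ_apply, Submodule.Quotient.mk_eq_zero]
  rw [Lmap_p]
  exact Submodule.subset_span (Set.mem_singleton _)

/-- Second backward map. -/
noncomputable def G2map : (ℤ_[p] ⧸ Ideal.span {(p : ℤ_[p])}) →ₗ[ℤ_[p]] GabModule p :=
  Submodule.liftQ _ ((relSubmodule p).mkQ ∘ₗ Lmap p) (G2_ker p)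

/-- The main linear equivalence. -/
noncomputable def mainEquiv : GabModule p ≃ₗ[ℤ_[p]] TargetMod p :=
  LinearEquiv.ofLinear (Submodule.liftQ _ (Fmap p) (Fmap_ker p))
    ((G1map p).coprod (G2map p))
    (by
      apply LinearMap.ext
      rintro ⟨u, t⟩
      obtain ⟨t, rfl⟩ := Submodule.mkQ_surjective _ t
      simp only [LinearMap.coe_comp, Function.comp_apply, LinearMap.coprod_apply,
        G1map, G2map, Submodule.liftQ_apply, Submodule.mkQ_apply, LinearMap.id_coe, id_eq,
        map_add]
      refine Prod.ext ?_ ?_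
      · funext j
        fin_cases j <;>
          simp [Fmap, Lmap, prj, prj3, G1map]
      · simp [Fmap, Lmap, prj, prj3, G1map]
    )
    (by
      apply Submodule.linearMap_qext
      apply LinearMap.ext
      intro v
      simp only [LinearMap.coe_comp, Function.comp_apply, Submodule.mkQ_apply,
        Submodule.liftQ_apply, LinearMap.id_coe, id_eq]
      have : Fmap p v = (fun j => ![v 1, v 0 + v 2, v 3] j,
          Submodule.Quotient.mk (v 0)) := by
        refine Prod.ext ?_ ?_
        case refine_2 => simp [Fmap, prj]
        funext j
        fin_cases j <;> simp [Fmap, prj]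
      rw [this]
      simp only [LinearMap.coprod_apply, G1map, G2map, Submodule.liftQ_apply,
        LinearMap.coe_comp, Function.comp_apply, Submodule.mkQ_apply]
      rw [← Submodule.Quotient.mk_add]
      congr 1
      funext i
      fin_cases i <;> simp [Lmap, prj3]
    )

instance : Subsingleton (ℚ_[p] ⊗[ℤ_[p]] (ℤ_[p] ⧸ Ideal.span {(p : ℤ_[p])})) := by
  have hm : ∀ m : ℤ_[p] ⧸ Ideal.span {(p : ℤ_[p])}, (p : ℤ_[p]) • m = 0 := by
    intro m
    obtain ⟨y, rfl⟩ := Submodule.mkQ_surjective _ m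
    simp only [Submodule.mkQ_apply, ← Submodule.Quotient.mk_smul,
      Submodule.Quotient.mk_eq_zero]
    exact Ideal.mul_mem_right _ _ (Submodule.mem_span_singleton_self _)
  have hp : (p : ℚ_[p]) ≠ 0 := by
    exact_mod_cast (Fact.out : p.Prime).ne_zero
  refine subsingleton_of_forall_eq 0 fun x => ?_
  induction x using TensorProduct.induction_on with
  | zero => rfl
  | tmul a m =>
      have ha : a = (p : ℤ_[p]) • ((p : ℚ_[p])⁻¹ * a) := by
        rw [Algebra.smul_def]
        push_cast
        field_simp
      rw [ha, TensorProduct.smul_tmul, hm, TensorProduct.tmul_zero]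
  | add x y hx hy => rw [hx, hy, add_zero]

/-- Base-changing kills the torsion part. -/
noncomputable def tensorEquiv :
    ℚ_[p] ⊗[ℤ_[p]] TargetMod p ≃ₗ[ℚ_[p]] ℚ_[p] ⊗[ℤ_[p]] (Fin 3 → ℤ_[p]) :=
  LinearEquiv.ofLinear
    ((LinearMap.fst ℤ_[p] (Fin 3 → ℤ_[p]) _).baseChange ℚ_[p])
    ((LinearMap.inl ℤ_[p] (Fin 3 → ℤ_[p]) _).baseChange ℚ_[p])
    (by rw [← LinearMap.baseChange_comp, LinearMap.fst_comp_inl, LinearMap.baseChange_id])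
    (by
      apply LinearMap.ext
      intro x
      have hid : (LinearMap.id : TargetMod p →ₗ[ℤ_[p]] TargetMod p) =
          (LinearMap.inl ℤ_[p] (Fin 3 → ℤ_[p]) _) ∘ₗ (LinearMap.fst ℤ_[p] _ _) +
          (LinearMap.inr ℤ_[p] (Fin 3 → ℤ_[p]) _) ∘ₗ (LinearMap.snd ℤ_[p] _ _) := by
        apply LinearMap.ext
        rintro ⟨a, b⟩
        simp
      have h0 : ((LinearMap.snd ℤ_[p] (Fin 3 → ℤ_[p]) _).baseChange ℚ_[p]) x = 0 :=
        Subsingleton.elim _ _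
      calc ((LinearMap.inl ℤ_[p] (Fin 3 → ℤ_[p]) _).baseChange ℚ_[p] ∘ₗ
            (LinearMap.fst ℤ_[p] (Fin 3 → ℤ_[p]) _).baseChange ℚ_[p]) x
          = (LinearMap.baseChange ℚ_[p] LinearMap.id) x -
            ((LinearMap.inr ℤ_[p] (Fin 3 → ℤ_[p]) _).baseChange ℚ_[p])
              (((LinearMap.snd ℤ_[p] (Fin 3 → ℤ_[p]) _).baseChange ℚ_[p]) x) := by
            rw [hid, LinearMap.baseChange_add, LinearMap.baseChange_comp,
              LinearMap.baseChange_comp]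
            simp
        _ = x := by rw [h0, map_zero, sub_zero, LinearMap.baseChange_id, LinearMap.id_apply])

end Aux

/-- `G^{ab} ≅ ℤ_p³ × ℤ/p`; in particular `G^{ab}` has an element of order `p`
and `rk_{ℚ_p}(G) = 3`. -/
theorem abelianization_of_amalgam (p : ℕ) [Fact p.Prime] :
    Nonempty (GabModule p ≃ₗ[ℤ_[p]]
      ((Fin 3 → ℤ_[p]) × (ℤ_[p] ⧸ Ideal.span {(p : ℤ_[p])}))) ∧
    (∃ a : GabModule p, addOrderOf a = p) ∧
    Module.finrank ℚ_[p] (ℚ_[p] ⊗[ℤ_[p]] GabModule p) = 3 := by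
  refine ⟨⟨mainEquiv p⟩, ?_, ?_⟩
  · refine ⟨Submodule.Quotient.mk
      (Pi.single (0 : Fin 4) (1 : ℤ_[p]) - Pi.single (2 : Fin 4) (1 : ℤ_[p])), ?_⟩
    refine addOrderOf_eq_prime ?_ ?_
    · rw [← Submodule.Quotient.mk_smul, Submodule.Quotient.mk_eq_zero,
        ← Nat.cast_smul_eq_nsmul ℤ_[p]]
      exact Submodule.subset_span (Set.mem_singleton _)
    · rw [Ne, Submodule.Quotient.mk_eq_zero, relSubmodule]
      intro h
      obtain ⟨c, hc⟩ := Submodule.mem_span_singleton.mp h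
      have h0 := congrFun hc 0
      simp [Pi.single_apply] at h0
      have hu : IsUnit (p : ℤ_[p]) := IsUnit.of_mul_eq_one c (by rw [mul_comm]; exact h0)
      rw [PadicInt.isUnit_iff, PadicInt.norm_p] at hu
      have h2 : (2 : ℝ) ≤ (p : ℝ) := by exact_mod_cast (Fact.out : p.Prime).two_le
      have : (p : ℝ)⁻¹ < 1 := by
        rw [inv_lt_one_iff₀]; right; linarith
      rw [hu] at this
      exact lt_irrefl _ this
  · have e1 : (ℚ_[p] ⊗[ℤ_[p]] GabModule p) ≃ₗ[ℚ_[p]]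
        ℚ_[p] ⊗[ℤ_[p]] TargetMod p := LinearEquiv.baseChange _ ℚ_[p] _ _ (mainEquiv p)
    have e2 := tensorEquiv p
    have e3 := TensorProduct.piScalarRight ℤ_[p] ℚ_[p] ℚ_[p] (Fin 3)
    rw [e1.finrank_eq, e2.finrank_eq, e3.finrank_eq]
    simp [Module.finrank_pi]
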